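/- A sequence d = (d_1,...,d_n) of non-negative integers is the degree sequence of some forest if and only if the sum of all d_i is an even number at most 2(n - n_0(d)) - 2, where n_0(d) is the number of zero entries of d (assuming n_0(d) < n). -/

import Mathlib

open SimpleGraph Finset

/-- The degree of a vertex `v` in a simple graph `G`. -/
noncomputable def deg {V : Type*} [Fintype V] (G : SimpleGraph V) (v : V) : ℕ :=
  Nat.card {u // G.Adj v u}

/-- The degree sequence of `G` as a multiset. -/
noncomputable def degSeq {V : Type*} [Fintype V] (G : SimpleGraph V) : Multiset ℕ :=
  Finset.univ.val.map (deg G)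

/-- `D` is a dominating set of `G`. -/
def IsDomSet {V : Type*} (G : SimpleGraph V) (D : Set V) : Prop :=
  ∀ v ∉ D, ∃ u ∈ D, G.Adj u v

/-- The domination number of `G`. -/
noncomputable def domNum {V : Type*} [Fintype V] (G : SimpleGraph V) : ℕ :=
  sInf {k | ∃ D : Set V, IsDomSet G D ∧ D.ncard = k}

/-- `I` is an independent set of `G`. -/
def IsIndepSet' {V : Type*} (G : SimpleGraph V) (I : Set V) : Prop :=
  ∀ u ∈ I, ∀ v ∈ I, ¬ G.Adj u v

/-- The independence number of `G`. -/
noncomputable def indepNum {V : Type*} [Fintype V] (G : SimpleGraph V) : ℕ :=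
  sSup {k | ∃ I : Set V, IsIndepSet' G I ∧ I.ncard = k}

/-- `v` is a support vertex of `G`: degree at least 2 with a neighbor of degree 1. -/
noncomputable def IsSupport {V : Type*} [Fintype V] (G : SimpleGraph V) (v : V) : Prop :=
  2 ≤ deg G v ∧ ∃ u, G.Adj v u ∧ deg G u = 1


lemma deg_eq_ncard {V : Type*} [Fintype V] (G : SimpleGraph V) (v : V) :
    deg G v = Set.ncard {w | G.Adj v w} := Nat.card_coe_set_eq _

lemma deg_eq_zero_iff {V : Type*} [Fintype V] (G : SimpleGraph V) (v : V) :
    deg G v = 0 ↔ ∀ w, ¬ G.Adj v w := by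
  rw [deg_eq_ncard, Set.ncard_eq_zero (Set.toFinite _), Set.eq_empty_iff_forall_notMem]
  simp

lemma deg_bot {V : Type*} [Fintype V] (v : V) : deg (⊥ : SimpleGraph V) v = 0 := by
  rw [deg_eq_zero_iff]; simp

section pendant
variable {V : Type*} {G : SimpleGraph V} {u v : V}

lemma sup_edge_adj (hne : u ≠ v) (a b : V) :
    (G ⊔ fromEdgeSet {s(u, v)}).Adj a b ↔ G.Adj a b ∨ (a = u ∧ b = v) ∨ (a = v ∧ b = u) := by
  simp only [SimpleGraph.sup_adj, fromEdgeSet_adj, Set.mem_singleton_iff, Sym2.eq_iff]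
  constructor
  · rintro (h | ⟨(⟨rfl, rfl⟩ | ⟨rfl, rfl⟩), h2⟩)
    · exact Or.inl h
    · exact Or.inr (Or.inl ⟨rfl, rfl⟩)
    · exact Or.inr (Or.inr ⟨rfl, rfl⟩)
  · rintro (h | ⟨rfl, rfl⟩ | ⟨rfl, rfl⟩)
    · exact Or.inl h
    · exact Or.inr ⟨Or.inl ⟨rfl, rfl⟩, hne⟩
    · exact Or.inr ⟨Or.inr ⟨rfl, rfl⟩, hne.symm⟩

lemma deg_sup_edge_left [Fintype V] (hne : u ≠ v) (hnadj : ¬ G.Adj u v) :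
    deg (G ⊔ fromEdgeSet {s(u, v)}) u = deg G u + 1 := by
  rw [deg_eq_ncard, deg_eq_ncard]
  have hset : {w | (G ⊔ fromEdgeSet {s(u, v)}).Adj u w} = insert v {w | G.Adj u w} := by
    ext z
    rw [Set.mem_setOf_eq, Set.mem_insert_iff, sup_edge_adj hne, Set.mem_setOf_eq]
    constructor
    · rintro (h | ⟨-, rfl⟩ | ⟨h1, -⟩)
      · exact Or.inr h
      · exact Or.inl rfl
      · exact absurd h1 hne
    · rintro (rfl | h)
      · exact Or.inr (Or.inl ⟨rfl, rfl⟩)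
      · exact Or.inl h
  rw [hset, Set.ncard_insert_of_notMem (by simpa using hnadj) (Set.toFinite _)]

lemma deg_sup_edge_other [Fintype V] (hne : u ≠ v) {w : V} (hw1 : w ≠ u) (hw2 : w ≠ v) :
    deg (G ⊔ fromEdgeSet {s(u, v)}) w = deg G w := by
  rw [deg_eq_ncard, deg_eq_ncard]
  congr 1
  ext z
  rw [Set.mem_setOf_eq, Set.mem_setOf_eq, sup_edge_adj hne]
  constructor
  · rintro (h | ⟨rfl, -⟩ | ⟨rfl, -⟩)
    · exact h
    · exact absurd rfl hw1
    · exact absurd rfl hw2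
  · exact Or.inl

lemma exists_edge_end {a b : V} (q : G.Walk a b) (hab : a ≠ b) :
    ∃ y, G.Adj y b ∧ s(y, b) ∈ q.edges := by
  induction q with
  | nil => exact absurd rfl hab
  | cons h p ih =>
    rename_i c d e
    by_cases hde : d = e
    · subst hde
      exact ⟨c, h, by simp⟩
    · obtain ⟨y, hy1, hy2⟩ := ih hde
      exact ⟨y, hy1, by simp [hy2]⟩

lemma sup_edge_isAcyclic (hG : G.IsAcyclic) (hu : ∀ w, ¬ G.Adj u w) (hne : u ≠ v) :
    (G ⊔ fromEdgeSet {s(u, v)}).IsAcyclic := by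
  classical
  intro a c hc
  by_cases hmem : u ∈ c.support
  · have hc' := hc.rotate hmem
    set c' := c.rotate u hmem with hc'def
    clear_value c'
    have honly : ∀ z, (G ⊔ fromEdgeSet {s(u, v)}).Adj u z → z = v := by
      intro z hz
      rcases (sup_edge_adj hne u z).mp hz with h | ⟨-, rfl⟩ | ⟨h1, -⟩
      · exact absurd h (hu z)
      · rfl
      · exact absurd h1 hne
    cases c' with
    | nil => exact hc'.not_of_nil
    | cons h q =>
      rename_i x
      have hxv : x = v := honly x h
      rw [SimpleGraph.Walk.cons_isCycle_iff] at hc'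
      obtain ⟨y, hy1, hy2⟩ := exists_edge_end q h.ne'
      have hyv : y = v := honly y hy1.symm
      have hkey : s(u, x) = s(y, u) := by rw [hyv, hxv, Sym2.eq_swap]
      exact hc'.2 (by rw [hkey]; exact hy2)
  · have hedges : ∀ e ∈ c.edges, e ∈ G.edgeSet := by
      intro e he
      have h2 := c.edges_subset_edgeSet he
      rw [SimpleGraph.edgeSet_sup, SimpleGraph.edgeSet_fromEdgeSet] at h2
      rcases h2 with h | ⟨h1, -⟩
      · exact h
      · rw [Set.mem_singleton_iff] at h1
        subst h1
        exact absurd (SimpleGraph.Walk.fst_mem_support_of_mem_edges c he) hmem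
    exact hG _ (hc.transfer hedges)
end pendant

lemma one_le_deg {V : Type*} [Fintype V] {G : SimpleGraph V} {v w : V} (h : G.Adj v w) :
    1 ≤ deg G v := by
  rw [deg_eq_ncard]
  exact (Set.ncard_pos (Set.toFinite _)).mpr ⟨w, h⟩

section leaf
variable {V : Type*} [Fintype V] [DecidableEq V] {G : SimpleGraph V}

lemma exists_leaf (hG : G.IsAcyclic) {a b : V} (hab : G.Adj a b) :
    ∃ x y, G.Adj x y ∧ deg G x = 1 := by
  classical
  set P : Set ℕ := {l | ∃ (u : V) (v : V) (p : G.Walk u v), p.IsPath ∧ p.length = l} with hP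
  have h1P : 1 ∈ P := by
    refine ⟨a, b, Walk.cons hab Walk.nil, ?_, by simp⟩
    rw [Walk.cons_isPath_iff]
    exact ⟨Walk.IsPath.nil, by simp [hab.ne]⟩
  have hbdd : BddAbove P := by
    refine ⟨Fintype.card V, ?_⟩
    rintro l ⟨u, v, p, hp, rfl⟩
    exact le_of_lt hp.length_lt
  obtain ⟨u, v, p, hp, hlen⟩ := Nat.sSup_mem ⟨1, h1P⟩ hbdd
  have h1L : 1 ≤ sSup P := le_csSup hbdd h1P
  cases p with
  | nil => rw [Walk.length_nil] at hlen; omega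
  | cons h q =>
    rename_i x
    -- u is a leaf
    rw [Walk.cons_isPath_iff] at hp
    refine ⟨u, x, h, ?_⟩
    have hx : x ∈ {w | G.Adj u w} := h
    have hge : 1 ≤ deg G u := one_le_deg h
    by_contra hne1
    have h2 : 1 < Set.ncard {w | G.Adj u w} := by rw [← deg_eq_ncard]; omega
    obtain ⟨w, hw, hwx⟩ := Set.exists_ne_of_one_lt_ncard h2 x
    have hwadj : G.Adj u w := hw
    by_cases hmem : w ∈ (Walk.cons h q).support
    · rw [Walk.support_cons, List.mem_cons] at hmem
      rcases hmem with rfl | hwq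
      · exact hwadj.ne rfl
      · set t := q.takeUntil w hwq with ht
        have htpath : t.IsPath := hp.1.takeUntil hwq
        have hcyc : (Walk.cons (hwadj.symm) (Walk.cons h t)).IsCycle := by
          rw [Walk.cons_isCycle_iff]
          constructor
          · rw [Walk.cons_isPath_iff]
            exact ⟨htpath, fun hu => hp.2 (Walk.support_takeUntil_subset q hwq hu)⟩
          · rw [Walk.edges_cons, List.mem_cons]
            rintro (heq | hmem')
            · rw [Sym2.eq_iff] at heq
              rcases heq with ⟨h1, -⟩ | ⟨h1, -⟩
              · exact hwadj.ne' h1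
              · exact hwx h1
            · exact hp.2 (Walk.support_takeUntil_subset q hwq (Walk.snd_mem_support_of_mem_edges t hmem'))
        exact hG _ hcyc
    · have hpath' : (Walk.cons hwadj.symm (Walk.cons h q)).IsPath := by
        rw [Walk.cons_isPath_iff]
        exact ⟨by rw [Walk.cons_isPath_iff]; exact hp, hmem⟩
      have : (Walk.cons hwadj.symm (Walk.cons h q)).length ∈ P :=
        ⟨w, v, _, hpath', rfl⟩
      have hle := le_csSup hbdd this
      rw [Walk.length_cons] at hle
      omega

end leaf

section delete
variable {V : Type*} [Fintype V] {G : SimpleGraph V} {u v : V}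

lemma deg_delete_other (huv : u ≠ v) {w : V} (hw1 : w ≠ u) (hw2 : w ≠ v) :
    deg (G.deleteEdges {s(u, v)}) w = deg G w := by
  rw [deg_eq_ncard, deg_eq_ncard]
  congr 1
  ext z
  simp only [Set.mem_setOf_eq, deleteEdges_adj, Set.mem_singleton_iff, and_iff_left_iff_imp]
  intro hadj heq
  rw [Sym2.eq_iff] at heq
  rcases heq with ⟨rfl, -⟩ | ⟨rfl, -⟩
  · exact hw1 rfl
  · exact hw2 rfl

lemma deg_delete_left (hadj : G.Adj u v) :
    deg (G.deleteEdges {s(u, v)}) u = deg G u - 1 := by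
  rw [deg_eq_ncard, deg_eq_ncard]
  have hset : {z | (G.deleteEdges {s(u, v)}).Adj u z} = {z | G.Adj u z} \ {v} := by
    ext z
    simp only [Set.mem_setOf_eq, deleteEdges_adj, Set.mem_singleton_iff, Set.mem_diff]
    rw [Sym2.congr_right]
  rw [hset, Set.ncard_diff_singleton_of_mem (show v ∈ {z | G.Adj u z} from hadj)]

lemma deg_delete_leaf (hadj : G.Adj u v) (hleaf : deg G v = 1) :
    deg (G.deleteEdges {s(u, v)}) v = 0 := by
  rw [deg_eq_zero_iff]
  intro z hz
  rw [deleteEdges_adj, Set.mem_singleton_iff] at hz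
  have hnbhd : {w | G.Adj v w} = {u} := by
    rw [deg_eq_ncard] at hleaf
    obtain ⟨c, hc⟩ := Set.ncard_eq_one.mp hleaf
    have : u ∈ ({c} : Set V) := hc ▸ (show G.Adj v u from hadj.symm)
    rw [Set.mem_singleton_iff] at this
    rw [hc, this]
  have hzu : z = u := by
    have : z ∈ {w | G.Adj v w} := hz.1
    rw [hnbhd] at this
    exact this
  subst hzu
  exact hz.2 (Sym2.eq_swap)

lemma delete_isAcyclic (hG : G.IsAcyclic) (s : Set (Sym2 V)) :
    (G.deleteEdges s).IsAcyclic := fun _a c hc =>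
  hG _ (hc.mapLe (deleteEdges_le s))

end delete

section realize
variable {V : Type*} [Fintype V] [DecidableEq V]

lemma realize_step (d : V → ℕ) (u t : V) (hut : u ≠ t) (hdu : d u = 1) (hdt : 1 ≤ d t)
    (hG' : ∃ G' : SimpleGraph V, G'.IsAcyclic ∧
      ∀ v, deg G' v = Function.update (Function.update d u 0) t (d t - 1) v) :
    ∃ G : SimpleGraph V, G.IsAcyclic ∧ ∀ v, deg G v = d v := by
  obtain ⟨G', hac, hdeg⟩ := hG'
  have hu0 : deg G' u = 0 := by
    rw [hdeg, Function.update_of_ne hut, Function.update_self]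
  have huiso : ∀ w, ¬ G'.Adj u w := (deg_eq_zero_iff _ _).mp hu0
  refine ⟨G' ⊔ fromEdgeSet {s(u, t)}, sup_edge_isAcyclic hac huiso hut, ?_⟩
  intro v
  by_cases hv1 : v = u
  · subst hv1
    rw [deg_sup_edge_left hut (huiso t), hu0, hdu]
  · by_cases hv2 : v = t
    · subst hv2
      rw [show s(u, v) = s(v, u) from Sym2.eq_swap,
        deg_sup_edge_left (Ne.symm hut) (fun h => huiso v h.symm), hdeg,
        Function.update_self]
      omega
    · rw [deg_sup_edge_other hut hv1 hv2, hdeg, Function.update_of_ne hv2,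
        Function.update_of_ne hv1]

lemma realize (s : ℕ) : ∀ (d : V → ℕ), ∑ v, d v = s → Even s →
    (s = 0 ∨ s + 2 ≤ 2 * (Finset.univ.filter fun v => d v ≠ 0).card) →
    ∃ G : SimpleGraph V, G.IsAcyclic ∧ ∀ v, deg G v = d v := by
  induction s using Nat.strong_induction_on with
  | _ s IH =>
    intro d hsum heven hcond
    by_cases hs0 : s = 0
    · subst hs0
      refine ⟨⊥, isAcyclic_bot, fun v => ?_⟩
      rw [deg_bot]
      exact (Finset.sum_eq_zero_iff.mp hsum v (Finset.mem_univ v)).symm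
    · have hm := hcond.resolve_left hs0
      set F := Finset.univ.filter fun v => d v ≠ 0 with hF
      -- there is a vertex of degree 1
      have hex1 : ∃ u, d u = 1 := by
        by_contra hno
        push_neg at hno
        have h2 : 2 * F.card ≤ s := by
          calc 2 * F.card = ∑ _v ∈ F, 2 := by rw [Finset.sum_const, smul_eq_mul, mul_comm]
          _ ≤ ∑ v ∈ F, d v := by
            refine Finset.sum_le_sum fun v hv => ?_
            rw [hF, Finset.mem_filter] at hv
            have := hno v
            omega
          _ ≤ ∑ v, d v := Finset.sum_le_sum_of_subset (Finset.filter_subset _ _)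
          _ = s := hsum
        omega
      obtain ⟨u, hdu⟩ := hex1
      have huF : u ∈ F := by rw [hF, Finset.mem_filter]; exact ⟨Finset.mem_univ u, by omega⟩
      have hs2 : 2 ≤ s := by
        rcases heven with ⟨k, hk⟩; omega
      -- common sum computation
      have hsum2 : ∀ t : V, t ≠ u → 1 ≤ d t →
          ∑ v, Function.update (Function.update d u 0) t (d t - 1) v = s - 2 := by
        intro t htu hdt
        rw [Finset.sum_update_of_mem (Finset.mem_univ t)]
        rw [Finset.sum_update_of_mem (show u ∈ Finset.univ \ {t} by
          simp [Ne.symm htu])]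
        simp only [← Finset.erase_eq]
        have hs' : s = d t + (d u + ∑ v ∈ (Finset.univ.erase t).erase u, d v) := by
          rw [← hsum, ← Finset.add_sum_erase _ _ (Finset.mem_univ t),
            ← Finset.add_sum_erase _ _ (Finset.mem_erase.mpr ⟨Ne.symm htu, Finset.mem_univ u⟩)]
        omega
      by_cases hbig : ∃ t, t ≠ u ∧ 2 ≤ d t
      · obtain ⟨t, htu, hdt⟩ := hbig
        set d' := Function.update (Function.update d u 0) t (d t - 1) with hd'
        have hsum' : ∑ v, d' v = s - 2 := hsum2 t htu (by omega)
        have hF' : (Finset.univ.filter fun v => d' v ≠ 0) = F.erase u := by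
          ext w
          rw [Finset.mem_filter, Finset.mem_erase, hF, Finset.mem_filter]
          simp only [Finset.mem_univ, true_and]
          by_cases hw1 : w = u
          · subst hw1
            rw [hd', Function.update_of_ne (Ne.symm htu), Function.update_self]
            simp
          · by_cases hw2 : w = t
            · subst hw2
              rw [hd', Function.update_self]
              constructor
              · intro; exact ⟨hw1, by omega⟩
              · intro; omega
            · rw [hd', Function.update_of_ne hw2, Function.update_of_ne hw1]
              exact ⟨fun h => ⟨hw1, h⟩, fun h => h.2⟩
        apply realize_step d u t (Ne.symm htu) hdu (by omega)
        apply IH (s - 2) (by omega) d' hsum'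
        · rcases heven with ⟨k, hk⟩
          exact ⟨k - 1, by omega⟩
        · right
          rw [hF', Finset.card_erase_of_mem huF]
          have hcF : 1 ≤ F.card := Finset.card_pos.mpr ⟨u, huF⟩
          omega
      · push_neg at hbig
        -- all degrees are ≤ 1 ; s = F.card
        have hsF : s = F.card := by
          rw [← hsum, ← Finset.sum_filter_add_sum_filter_not Finset.univ (fun v => d v ≠ 0)]
          have h1 : ∑ v ∈ Finset.univ.filter (fun v => ¬ d v ≠ 0), d v = 0 := by
            refine Finset.sum_eq_zero fun v hv => ?_
            rw [Finset.mem_filter] at hv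
            omega
          have h2 : ∑ v ∈ F, d v = F.card := by
            rw [Finset.card_eq_sum_ones F]
            refine Finset.sum_congr rfl fun v hv => ?_
            rw [hF, Finset.mem_filter] at hv
            by_cases hvu : v = u
            · subst hvu; omega
            · have := hbig v hvu
              omega
          rw [h1, h2, add_zero]
        have hcF2 : 2 ≤ F.card := by omega
        obtain ⟨t, htF, htu⟩ := Finset.exists_mem_ne (s := F) (by omega) u
        have hdt : d t = 1 := by
          rw [hF, Finset.mem_filter] at htF
          have := hbig t htu
          omega
        set d' := Function.update (Function.update d u 0) t (d t - 1) with hd'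
        have hsum' : ∑ v, d' v = s - 2 := hsum2 t htu (by omega)
        have hF' : (Finset.univ.filter fun v => d' v ≠ 0) = (F.erase u).erase t := by
          ext w
          rw [Finset.mem_filter, Finset.mem_erase, Finset.mem_erase, hF, Finset.mem_filter]
          simp only [Finset.mem_univ, true_and]
          by_cases hw1 : w = u
          · subst hw1
            rw [hd', Function.update_of_ne (Ne.symm htu), Function.update_self]
            simp
          · by_cases hw2 : w = t
            · subst hw2
              rw [hd', Function.update_self]
              simp [hdt]
            · rw [hd', Function.update_of_ne hw2, Function.update_of_ne hw1]
              exact ⟨fun h => ⟨hw2, hw1, h⟩, fun h => h.2.2⟩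
        apply realize_step d u t (Ne.symm htu) hdu (by omega)
        apply IH (s - 2) (by omega) d' hsum'
        · rcases heven with ⟨k, hk⟩
          exact ⟨k - 1, by omega⟩
        · rw [hF', Finset.card_erase_of_mem (Finset.mem_erase.mpr ⟨htu, htF⟩),
            Finset.card_erase_of_mem huF]
          rcases heven with ⟨k, hk⟩
          omega
end realize

lemma forest_bound {V : Type*} [Fintype V] [DecidableEq V] (s : ℕ) :
    ∀ (G : SimpleGraph V), ∑ v, deg G v = s → G.IsAcyclic →
    s = 0 ∨ (Even s ∧ s + 2 ≤ 2 * (Finset.univ.filter fun v => deg G v ≠ 0).card) := by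
  induction s using Nat.strong_induction_on with
  | _ s IH =>
    intro G hsum hG
    by_cases hs0 : s = 0
    · exact Or.inl hs0
    · right
      -- there is an edge
      have hedge : ∃ a b, G.Adj a b := by
        by_contra hno
        push_neg at hno
        apply hs0
        rw [← hsum]
        exact Finset.sum_eq_zero fun v _ => (deg_eq_zero_iff G v).mpr (hno v)
      obtain ⟨a, b, hab⟩ := hedge
      obtain ⟨x, y, hxy, hx1⟩ := exists_leaf hG hab
      -- u := y (neighbor), v := x (leaf)
      set G₂ := G.deleteEdges {s(y, x)} with hG₂
      have hne : y ≠ x := hxy.ne'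
      have hdu : deg G₂ y = deg G y - 1 := deg_delete_left hxy.symm
      have hdv : deg G₂ x = 0 := deg_delete_leaf hxy.symm hx1
      have hdw : ∀ w, w ≠ y → w ≠ x → deg G₂ w = deg G w :=
        fun w hw1 hw2 => deg_delete_other hne hw1 hw2
      have hyge : 1 ≤ deg G y := one_le_deg hxy.symm
      -- sum relation
      have hdecomp : ∀ w, deg G w = deg G₂ w + ((if w = y then 1 else 0) +
          (if w = x then 1 else 0)) := by
        intro w
        by_cases hw1 : w = y
        · subst hw1
          rw [hdu, if_pos rfl, if_neg hne]
          omega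
        · by_cases hw2 : w = x
          · subst hw2
            rw [hdv, if_neg hw1, if_pos rfl, hx1]
          · rw [hdw w hw1 hw2, if_neg hw1, if_neg hw2]
            omega
      have hsum2 : s = (∑ v, deg G₂ v) + 2 := by
        rw [← hsum]
        calc ∑ v, deg G v
            = ∑ v, (deg G₂ v + ((if v = y then 1 else 0) + (if v = x then 1 else 0))) :=
              Finset.sum_congr rfl fun v _ => hdecomp v
          _ = (∑ v, deg G₂ v) + ((∑ v : V, if v = y then 1 else 0) +
              (∑ v : V, if v = x then 1 else 0)) := by
              rw [Finset.sum_add_distrib, Finset.sum_add_distrib]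
          _ = (∑ v, deg G₂ v) + 2 := by
              rw [Finset.sum_ite_eq' Finset.univ y (fun _ => 1),
                Finset.sum_ite_eq' Finset.univ x (fun _ => 1)]
              simp
      -- filter cards
      have hxF : x ∈ Finset.univ.filter fun v => deg G v ≠ 0 := by
        rw [Finset.mem_filter]
        exact ⟨Finset.mem_univ x, by omega⟩
      have hyF : y ∈ Finset.univ.filter fun v => deg G v ≠ 0 := by
        rw [Finset.mem_filter]
        exact ⟨Finset.mem_univ y, by omega⟩
      have hsub : (Finset.univ.filter fun v => deg G₂ v ≠ 0) ⊆
          (Finset.univ.filter fun v => deg G v ≠ 0).erase x := by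
        intro w hw
        rw [Finset.mem_filter] at hw
        rw [Finset.mem_erase, Finset.mem_filter]
        have hwx : w ≠ x := fun h => hw.2 (h ▸ hdv)
        refine ⟨hwx, Finset.mem_univ w, ?_⟩
        by_cases hwy : w = y
        · subst hwy; omega
        · rw [← hdw w hwy hwx]; exact hw.2
      have hcard2 : (Finset.univ.filter fun v => deg G₂ v ≠ 0).card ≤
          (Finset.univ.filter fun v => deg G v ≠ 0).card - 1 := by
        have := Finset.card_le_card hsub
        rwa [Finset.card_erase_of_mem hxF] at this
      have hcard1 : 2 ≤ (Finset.univ.filter fun v => deg G v ≠ 0).card :=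
        Finset.one_lt_card_iff.mpr ⟨x, y, hxF, hyF, hxy.ne⟩
      rcases IH (s - 2) (by omega) G₂ (by omega) (delete_isAcyclic hG _) with h0 | ⟨hev, hb⟩
      · have hs2 : s = 2 := by omega
        subst hs2
        exact ⟨⟨1, rfl⟩, by omega⟩
      · constructor
        · obtain ⟨k, hk⟩ := hev
          exact ⟨k + 1, by omega⟩
        · omega

-- helper: count of zero values via multiset
lemma card_filter_zero_eq_count {V : Type*} [Fintype V] (f : V → ℕ) :
    (Finset.univ.filter fun v => f v = 0).card = Multiset.count 0 (Finset.univ.val.map f) := by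
  rw [Multiset.count_map]
  rw [Multiset.filter_congr (fun x _ => (eq_comm : 0 = f x ↔ f x = 0))]
  rfl

theorem stmt_1 (n : ℕ) (d : Fin n → ℕ)
    (h0 : (Finset.univ.filter fun i => d i = 0).card < n) :
    (∃ G : SimpleGraph (Fin n), G.IsAcyclic ∧ degSeq G = Finset.univ.val.map d) ↔
      (Even (∑ i, d i) ∧
        ∑ i, d i ≤ 2 * (n - (Finset.univ.filter fun i => d i = 0).card) - 2) := by
  have hsplit : ∀ f : Fin n → ℕ, (Finset.univ.filter fun i => f i = 0).card +
      (Finset.univ.filter fun i => f i ≠ 0).card = n := by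
    intro f
    have h := Finset.card_filter_add_card_filter_not
      (s := (Finset.univ : Finset (Fin n))) (p := fun i => f i = 0)
    simp only [ne_eq]
    simpa [Finset.card_univ] using h
  constructor
  · rintro ⟨G, hac, hdseq⟩
    have hsum : ∑ v, deg G v = ∑ i, d i := by
      rw [Finset.sum, Finset.sum, ← degSeq, hdseq]
    have hcount : (Finset.univ.filter fun v => deg G v = 0).card =
        (Finset.univ.filter fun i => d i = 0).card := by
      rw [card_filter_zero_eq_count, card_filter_zero_eq_count, ← degSeq, hdseq]
    -- some entry is nonzero
    have hex : ∃ i, d i ≠ 0 := by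
      by_contra hall
      push_neg at hall
      have : (Finset.univ.filter fun i => d i = 0) = Finset.univ := by
        rw [Finset.filter_eq_self]
        exact fun i _ => hall i
      rw [this, Finset.card_univ, Fintype.card_fin] at h0
      omega
    obtain ⟨i0, hi0⟩ := hex
    have hspos : 1 ≤ ∑ i, d i :=
      le_trans (by omega) (Finset.single_le_sum (f := d) (fun _ _ => Nat.zero_le _)
        (Finset.mem_univ i0))
    rcases forest_bound (∑ i, d i) G hsum hac with h | ⟨hev, hb⟩
    · omega
    · refine ⟨hev, ?_⟩
      have h1 := hsplit d
      have h2 := hsplit (deg G)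
      have h3 : (Finset.univ.filter fun v => deg G v ≠ 0).card =
          (Finset.univ.filter fun i => d i ≠ 0).card := by omega
      omega
  · rintro ⟨hev, hle⟩
    have h1 := hsplit d
    obtain ⟨G, hac, hdeg⟩ := realize (∑ i, d i) d rfl hev (Or.inr (by omega))
    refine ⟨G, hac, ?_⟩
    rw [degSeq]
    exact Multiset.map_congr rfl fun v _ => hdeg v
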